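/- arXiv:0910.2032 — 2 statements merged into one kernel-verified Lean document; each statement's English description precedes it below -/
import Mathlib

section
/- Let V be a finite-dimensional inner product space over ℂ, let d : V →ₗ[ℂ] V be a linear map with d ∘ d = 0, and set Δ := d ∘ d† + d† ∘ d. Let u ∈ range d. Then: (a) there is a unique w in the orthogonal complement of ker Δ with Δ w = u; (b) the vector β := d† w satisfies d β = u; (c) β has minimal norm among all solutions β' of d β' = u; and (d) ‖β‖² = re ⟪u, w⟫. -/
open scoped ComplexInnerProductSpace

/-- Minimal-norm `d`-potential of a `d`-exact vector via the Green operator of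
`Δ = d d† + d† d`: there is a unique `w ⟂ ker Δ` with `Δ w = u`; `β := d† w`
solves `d β = u`, has minimal norm among all solutions, and `‖β‖² = re ⟪u, w⟫`. -/
theorem stmt1 {V : Type*} [NormedAddCommGroup V] [InnerProductSpace ℂ V]
    [FiniteDimensional ℂ V] (d : V →ₗ[ℂ] V) (hd : d ∘ₗ d = 0)
    (Δ : V →ₗ[ℂ] V) (hΔ : Δ = d ∘ₗ LinearMap.adjoint d + LinearMap.adjoint d ∘ₗ d)
    (u : V) (hu : u ∈ LinearMap.range d) :
    (∃! w : V, w ∈ (LinearMap.ker Δ)ᗮ ∧ Δ w = u) ∧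
    ∀ w : V, w ∈ (LinearMap.ker Δ)ᗮ → Δ w = u →
      d (LinearMap.adjoint d w) = u ∧
      (∀ β' : V, d β' = u → ‖LinearMap.adjoint d w‖ ≤ ‖β'‖) ∧
      ‖LinearMap.adjoint d w‖ ^ 2 = (⟪u, w⟫).re := by
  obtain ⟨v, rfl⟩ := hu
  have hdd : ∀ x : V, d (d x) = 0 := fun x => by
    simpa using LinearMap.congr_fun hd x
  -- self-adjointness of Δ
  have hsym : ∀ x y : V, (⟪Δ x, y⟫ : ℂ) = ⟪x, Δ y⟫ := by
    intro x y
    simp only [hΔ, LinearMap.add_apply, LinearMap.comp_apply, inner_add_left, inner_add_right]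
    rw [← LinearMap.adjoint_inner_right d (LinearMap.adjoint d x) y,
      LinearMap.adjoint_inner_left d (LinearMap.adjoint d y) x,
      LinearMap.adjoint_inner_left d y (d x),
      LinearMap.adjoint_inner_right d x (d y)]
  -- kernel elements are killed by d and d†
  have hker : ∀ x : V, Δ x = 0 → LinearMap.adjoint d x = 0 ∧ d x = 0 := by
    intro x hx
    have h0 : ((‖LinearMap.adjoint d x‖ : ℂ) ^ 2 + (‖d x‖ : ℂ) ^ 2) = 0 := by
      have h1 : (⟪Δ x, x⟫ : ℂ) = 0 := by rw [hx, inner_zero_left]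
      rw [hΔ] at h1
      simp only [LinearMap.add_apply, LinearMap.comp_apply, inner_add_left] at h1
      rw [← LinearMap.adjoint_inner_right d (LinearMap.adjoint d x) x,
        LinearMap.adjoint_inner_left d x (d x),
        inner_self_eq_norm_sq_to_K, inner_self_eq_norm_sq_to_K] at h1
      exact h1
    have h0' : ‖LinearMap.adjoint d x‖ ^ 2 + ‖d x‖ ^ 2 = 0 := by
      exact_mod_cast h0
    constructor
    · have : ‖LinearMap.adjoint d x‖ = 0 := by nlinarith [sq_nonneg ‖d x‖, norm_nonneg (LinearMap.adjoint d x), norm_nonneg (d x)]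
      simpa using this
    · have : ‖d x‖ = 0 := by nlinarith [norm_nonneg (LinearMap.adjoint d x), norm_nonneg (d x)]
      simpa using this
  -- u ⟂ ker Δ
  have hu_orth : d v ∈ (LinearMap.ker Δ)ᗮ := by
    intro x hx
    rw [← LinearMap.adjoint_inner_left, (hker x hx).1, inner_zero_left]
  -- range Δ = (ker Δ)ᗮ
  have hrange : LinearMap.range Δ = (LinearMap.ker Δ)ᗮ := by
    have hle : LinearMap.range Δ ≤ (LinearMap.ker Δ)ᗮ := by
      rintro _ ⟨x, rfl⟩ y hy
      rw [← hsym, LinearMap.mem_ker.mp hy, inner_zero_left]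
    refine Submodule.eq_of_le_of_finrank_eq hle ?_
    have h1 := LinearMap.finrank_range_add_finrank_ker Δ
    have h2 := Submodule.finrank_add_finrank_orthogonal (LinearMap.ker Δ)
    omega
  -- existence
  obtain ⟨w₀, hw₀⟩ := hrange ▸ hu_orth
  set K := LinearMap.ker Δ
  have hwmem : (w₀ : V) - (Submodule.orthogonalProjection K w₀ : V) ∈ Kᗮ :=
    Submodule.sub_starProjection_mem_orthogonal w₀
  have hwΔ : Δ ((w₀ : V) - (Submodule.orthogonalProjection K w₀ : V)) = d v := by
    rw [map_sub, hw₀, LinearMap.mem_ker.mp (Submodule.orthogonalProjection K w₀).2, sub_zero]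
  refine ⟨⟨(w₀ : V) - (Submodule.orthogonalProjection K w₀ : V), ⟨hwmem, hwΔ⟩, ?_⟩, ?_⟩
  · rintro y ⟨hy1, hy2⟩
    have hmem : y - ((w₀ : V) - (Submodule.orthogonalProjection K w₀ : V)) ∈ K := by
      rw [LinearMap.mem_ker, map_sub, hy2, hwΔ, sub_self]
    have horth : y - ((w₀ : V) - (Submodule.orthogonalProjection K w₀ : V)) ∈ Kᗮ :=
      Submodule.sub_mem _ hy1 hwmem
    have := horth _ hmem
    rw [inner_self_eq_zero] at this
    rwa [sub_eq_zero] at this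
  · intro w hw1 hw2
    -- (b): d† d w = 0, hence d d† w = u
    have hz : LinearMap.adjoint d (d w) = 0 := by
      have hdz : d (LinearMap.adjoint d (d w)) = 0 := by
        have := congrArg d hw2
        rw [hΔ] at this
        simp only [LinearMap.add_apply, LinearMap.comp_apply, map_add] at this
        rw [hdd (LinearMap.adjoint d w), hdd v, zero_add] at this
        exact this
      have h0 : (⟪LinearMap.adjoint d (d w), LinearMap.adjoint d (d w)⟫ : ℂ) = 0 := by
        rw [LinearMap.adjoint_inner_left, hdz, inner_zero_right]
      exact inner_self_eq_zero.mp h0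
    have hb : d (LinearMap.adjoint d w) = d v := by
      have := hw2
      rw [hΔ] at this
      simp only [LinearMap.add_apply, LinearMap.comp_apply] at this
      rwa [hz, add_zero] at this
    refine ⟨hb, ?_, ?_⟩
    · intro β' hβ'
      have horth : (⟪LinearMap.adjoint d w, β' - LinearMap.adjoint d w⟫ : ℂ) = 0 := by
        rw [LinearMap.adjoint_inner_left, map_sub, hβ', hb, sub_self, inner_zero_right]
      have hns : ‖β'‖ ^ 2 = ‖LinearMap.adjoint d w‖ ^ 2 + ‖β' - LinearMap.adjoint d w‖ ^ 2 := by
        have := norm_add_sq (𝕜 := ℂ) (LinearMap.adjoint d w) (β' - LinearMap.adjoint d w)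
        rw [horth] at this
        simpa using this
      nlinarith [norm_nonneg β', norm_nonneg (LinearMap.adjoint d w),
        sq_nonneg ‖β' - LinearMap.adjoint d w‖]
    · have h1 : (⟪LinearMap.adjoint d w, LinearMap.adjoint d w⟫ : ℂ) = ⟪w, d v⟫ := by
        rw [LinearMap.adjoint_inner_left, hb]
      rw [norm_sq_eq_re_inner (𝕜 := ℂ), h1, inner_re_symm]
      rfl
end

section
/- Let V be a finite-dimensional inner product space over ℂ and let B be a symmetric endomorphism of V with re ⟪B x, x⟫ > 0 for every nonzero x (so B is positive definite and invertible). Let ε > 0, μ > 0, and let f ∈ V with ‖f‖ = 1. Assume that for every eigenvalue λ of B such that the orthogonal projection of f onto the λ-eigenspace of B is nonzero, one has μ ≥ (1+ε) λ. Then 1/μ ≤ (1/(1+ε)) · re ⟪B⁻¹ f, f⟫. -/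
open scoped ComplexInnerProductSpace

/-- For a positive-definite symmetric endomorphism `B`, a unit vector `f` whose nonzero
eigencomponents correspond to eigenvalues `λ` with `μ ≥ (1+ε)λ` satisfies
`1/μ ≤ (1/(1+ε)) · re ⟪B⁻¹ f, f⟫`. -/
theorem stmt8 {V : Type*} [NormedAddCommGroup V] [InnerProductSpace ℂ V]
    [FiniteDimensional ℂ V] (B : V →ₗ[ℂ] V) (hB : B.IsSymmetric)
    (hBpos : ∀ x : V, x ≠ 0 → 0 < (⟪B x, x⟫).re)
    (ε μ : ℝ) (hε : 0 < ε) (hμ : 0 < μ) (f : V) (hf : ‖f‖ = 1)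
    (heig : ∀ lam : ℝ,
      (↑(Submodule.orthogonalProjection (Module.End.eigenspace B (lam : ℂ)) f) : V) ≠ 0 →
      (1 + ε) * lam ≤ μ) :
    (∃ g : V, B g = f) ∧
    ∀ g : V, B g = f → 1 / μ ≤ (1 / (1 + ε)) * (⟪g, f⟫).re := by
  classical
  have hinj : Function.Injective B := by
    intro x y hxy
    by_contra h
    have hx : x - y ≠ 0 := sub_ne_zero.mpr h
    have := hBpos (x - y) hx
    rw [map_sub, hxy, sub_self] at this
    simp at this
  constructor
  · exact (LinearMap.injective_iff_surjective.mp hinj) f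
  intro g hg
  have hrank : Module.finrank ℂ V = Module.finrank ℂ V := rfl
  set n := Module.finrank ℂ V
  set b := hB.eigenvectorBasis hrank with hbdef
  set lam : Fin n → ℝ := hB.eigenvalues hrank with hlamdef
  have happly : ∀ i, B (b i) = (lam i : ℂ) • b i := fun i =>
    hB.apply_eigenvectorBasis hrank i
  have hbb : ∀ i : Fin n, ⟪b i, b i⟫ = 1 := fun i =>
    (orthonormal_iff_ite.mp b.orthonormal i i).trans (if_pos rfl)
  have hlampos : ∀ i, 0 < lam i := by
    intro i
    have hbne : b i ≠ 0 := b.orthonormal.ne_zero i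
    have h := hBpos (b i) hbne
    rw [happly i, inner_smul_left, hbb i, mul_one] at h
    simpa using h
  -- the coefficient of g in direction b i
  set c : Fin n → ℂ := fun i => ⟪b i, f⟫ with hc
  have hbg : ∀ i, ⟪b i, g⟫ = c i / (lam i : ℂ) := by
    intro i
    have h1 : ⟪B (b i), g⟫ = c i := by rw [hB (b i) g, hg]
    rw [happly i, inner_smul_left] at h1
    have hlne : ((lam i : ℂ)) ≠ 0 := by
      exact_mod_cast (hlampos i).ne'
    field_simp at h1 ⊢
    rw [← h1]
    simp [mul_comm]
  have hsum : ⟪g, f⟫ = ∑ i, ⟪g, b i⟫ * ⟪b i, f⟫ := (b.sum_inner_mul_inner g f).symm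
  have hterm : ∀ i, ⟪g, b i⟫ * ⟪b i, f⟫ = ((Complex.normSq (c i) / lam i : ℝ) : ℂ) := by
    intro i
    rw [← inner_conj_symm, hbg i]
    push_cast
    rw [map_div₀, Complex.conj_ofReal]
    rw [div_mul_eq_mul_div, mul_comm, Complex.mul_conj]
  have hre : (⟪g, f⟫).re = ∑ i, Complex.normSq (c i) / lam i := by
    rw [hsum]
    simp only [hterm]
    rw [← Complex.ofReal_sum]
    exact Complex.ofReal_re _
  have hone : ∑ i, Complex.normSq (c i) = 1 := by
    have h2 : ⟪f, f⟫ = ∑ i, ⟪f, b i⟫ * ⟪b i, f⟫ := (b.sum_inner_mul_inner f f).symm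
    have h3 : ∀ i : Fin n, ⟪f, b i⟫ * ⟪b i, f⟫ = ((Complex.normSq (c i) : ℝ) : ℂ) := by
      intro i
      rw [← inner_conj_symm, mul_comm, Complex.mul_conj]
    rw [inner_self_eq_norm_sq_to_K, hf] at h2
    simp only [h3, ← Complex.ofReal_sum] at h2
    norm_num at h2
    exact_mod_cast h2.symm
  have hbound : ∀ i, (1 + ε) / μ * Complex.normSq (c i) ≤ Complex.normSq (c i) / lam i := by
    intro i
    by_cases hci : c i = 0
    · simp [hci]
    · have hproj : (↑(Submodule.orthogonalProjection (Module.End.eigenspace B ((lam i : ℝ) : ℂ)) f) : V) ≠ 0 := by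
        intro h0
        apply hci
        have hmem : b i ∈ Module.End.eigenspace B ((lam i : ℝ) : ℂ) :=
          (hB.hasEigenvector_eigenvectorBasis hrank i).1
        have : (↑(Submodule.orthogonalProjection (Module.End.eigenspace B ((lam i : ℝ) : ℂ)) (b i)) : V) = b i := by
          rw [show b i = ((⟨b i, hmem⟩ : Module.End.eigenspace B ((lam i : ℝ) : ℂ)) : V) from rfl,
            Submodule.orthogonalProjection_mem_subspace_eq_self]
        calc c i = ⟪b i, f⟫ := rfl
          _ = ⟪(↑(Submodule.orthogonalProjection (Module.End.eigenspace B ((lam i : ℝ) : ℂ)) (b i)) : V), f⟫ := by rw [this]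
          _ = ⟪b i, (↑(Submodule.orthogonalProjection (Module.End.eigenspace B ((lam i : ℝ) : ℂ)) f) : V)⟫ :=
            Submodule.inner_starProjection_left_eq_right _ _ _
          _ = 0 := by rw [h0, inner_zero_right]
      have hle : (1 + ε) * lam i ≤ μ := heig (lam i) hproj
      have h1 : (1 + ε) / μ ≤ 1 / lam i := by
        rw [div_le_div_iff₀ hμ (hlampos i)]
        linarith
      have := mul_le_mul_of_nonneg_right h1 (Complex.normSq_nonneg (c i))
      calc (1 + ε) / μ * Complex.normSq (c i) ≤ 1 / lam i * Complex.normSq (c i) := this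
        _ = Complex.normSq (c i) / lam i := by ring
  have hkey : (1 + ε) / μ ≤ (⟪g, f⟫).re := by
    rw [hre]
    calc (1 + ε) / μ = (1 + ε) / μ * ∑ i, Complex.normSq (c i) := by rw [hone]; ring
      _ = ∑ i, (1 + ε) / μ * Complex.normSq (c i) := Finset.mul_sum _ _ _
      _ ≤ ∑ i, Complex.normSq (c i) / lam i := Finset.sum_le_sum fun i _ => hbound i
  have h1e : (0:ℝ) < 1 + ε := by linarith
  have := mul_le_mul_of_nonneg_left hkey (le_of_lt (one_div_pos.mpr h1e))
  calc 1 / μ = 1 / (1 + ε) * ((1 + ε) / μ) := by field_simp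
    _ ≤ 1 / (1 + ε) * (⟪g, f⟫).re := this
end
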